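/- Let T be a positive integer, let 𝒯 ⊆ {1,…,T}, and let (x_t)_{t∈𝒯} be a family of non-negative real numbers. Then ∑_{t∈𝒯} x_t / (∑_{s∈𝒯, s≤t} x_s)^{1/3} ≤ (3/2) (∑_{t∈𝒯} x_t)^{2/3}, where any summand whose numerator x_t equals 0 is interpreted as 0. -/

import Mathlib

open Finset

lemma key_ineq (a b : ℝ) (ha : 0 ≤ a) (hb : 0 ≤ b) :
    a / (a + b) ^ ((1 : ℝ) / 3) ≤ 3 / 2 * ((a + b) ^ ((2 : ℝ) / 3) - b ^ ((2 : ℝ) / 3)) := by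
  rcases eq_or_lt_of_le (by linarith : (0:ℝ) ≤ a + b) with hS | hS
  · have ha0 : a = 0 := by linarith
    have hb0 : b = 0 := by linarith
    simp [ha0, hb0]
  · have hpow : (0:ℝ) < (a + b) ^ ((1 : ℝ) / 3) := Real.rpow_pos_of_pos hS _
    rw [div_le_iff₀ hpow]
    have hgm : b ^ ((2:ℝ)/3) * (a + b) ^ ((1:ℝ)/3)
        ≤ 2/3 * b + 1/3 * (a + b) :=
      Real.geom_mean_le_arith_mean2_weighted (by norm_num) (by norm_num) hb hS.le
        (by norm_num)
    have hmul : (a + b) ^ ((2:ℝ)/3) * (a + b) ^ ((1:ℝ)/3) = a + b := by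
      rw [← Real.rpow_add hS]
      norm_num
    nlinarith [hgm, hmul]

lemma aux_ineq (x : ℕ → ℝ) (𝒯 : Finset ℕ) (hx : ∀ t ∈ 𝒯, 0 ≤ x t) :
    ∑ t ∈ 𝒯, x t / (∑ s ∈ 𝒯.filter (fun s => s ≤ t), x s) ^ ((1 : ℝ) / 3)
      ≤ 3 / 2 * (∑ t ∈ 𝒯, x t) ^ ((2 : ℝ) / 3) := by
  induction 𝒯 using Finset.induction_on_max with
  | empty => simp
  | insert a s hmax ih =>
    have hans : a ∉ s := fun h => lt_irrefl a (hmax a h)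
    have hxa : 0 ≤ x a := hx a (mem_insert_self a s)
    have hxs : ∀ t ∈ s, 0 ≤ x t := fun t ht => hx t (mem_insert_of_mem ht)
    have hB : 0 ≤ ∑ t ∈ s, x t := Finset.sum_nonneg hxs
    rw [Finset.sum_insert hans, Finset.sum_insert hans]
    have h1 : (insert a s).filter (fun s' => s' ≤ a) = insert a s := by
      apply Finset.filter_true_of_mem
      intro b hb
      rcases Finset.mem_insert.1 hb with rfl | hb
      · exact le_refl b
      · exact (hmax b hb).le
    have h2 : ∀ t ∈ s, (insert a s).filter (fun s' => s' ≤ t) = s.filter (fun s' => s' ≤ t) := by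
      intro t ht
      rw [Finset.filter_insert, if_neg (not_le.2 (hmax t ht))]
    have hsum2 : ∑ t ∈ s, x t / (∑ s' ∈ (insert a s).filter (fun s' => s' ≤ t), x s') ^ ((1:ℝ)/3)
        = ∑ t ∈ s, x t / (∑ s' ∈ s.filter (fun s' => s' ≤ t), x s') ^ ((1:ℝ)/3) := by
      apply Finset.sum_congr rfl
      intro t ht
      rw [h2 t ht]
    rw [h1, hsum2, Finset.sum_insert hans]
    have hkey := key_ineq (x a) (∑ t ∈ s, x t) hxa hB
    have := ih hxs
    linarith

theorem stmt_0 (T : ℕ) (hT : 1 ≤ T) (𝒯 : Finset ℕ) (h𝒯 : 𝒯 ⊆ Finset.Icc 1 T)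
    (x : ℕ → ℝ) (hx : ∀ t ∈ 𝒯, 0 ≤ x t) :
    ∑ t ∈ 𝒯, x t / (∑ s ∈ 𝒯.filter (fun s => s ≤ t), x s) ^ ((1 : ℝ) / 3)
      ≤ 3 / 2 * (∑ t ∈ 𝒯, x t) ^ ((2 : ℝ) / 3) := by
  exact aux_ineq x 𝒯 hx
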